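/- Let φᵢ, φⱼ : ℝ^d → ℝ be twice continuously differentiable, x₀ ∈ ℝ^d, and define A(t) = ∫_{ℝ^d} (4πt)^{−d/2} e^{−‖y−x₀‖²/(4t)} (φᵢ(y)−φᵢ(x₀))(φⱼ(y)−φⱼ(x₀)) dy for t > 0. If φᵢ and φⱼ are bounded with bounded first and second derivatives, then lim_{t→0⁺} A(t)/(2t) = ⟨∇φᵢ(x₀), ∇φⱼ(x₀)⟩. -/

import Mathlib

open scoped RealInnerProductSpace
open MeasureTheory Real Filter

lemma intg_pow_gauss (n : ℕ) : Integrable (fun x : ℝ => x ^ n * rexp (-x ^ 2)) := by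
  have h := integrable_rpow_mul_exp_neg_mul_sq (b := 1) one_pos
    (s := (n : ℝ)) (lt_of_lt_of_le (by norm_num) (Nat.cast_nonneg n))
  simpa [Real.rpow_natCast] using h


lemma pi_moment {d : ℕ} (a b : Fin d → ℝ)
    (M : ℕ → ℝ) (hM : ∀ n, M n = ∫ x : ℝ, x ^ n * rexp (-x ^ 2))
    (hM0 : M 0 = Real.sqrt π) (hM1 : M 1 = 0) (hM2 : M 2 = Real.sqrt π / 2) :
    ∫ v : Fin d → ℝ, rexp (-(∑ i, (v i) ^ 2)) * ((∑ k, a k * v k) * (∑ l, b l * v l))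
      = Real.sqrt π ^ d / 2 * ∑ k, a k * b k := by
  classical
  set n : Fin d × Fin d → Fin d → ℕ :=
    fun p i => (if i = p.1 then 1 else 0) + (if i = p.2 then 1 else 0) with hn
  have key : ∀ v : Fin d → ℝ, rexp (-(∑ i, (v i) ^ 2)) * ((∑ k, a k * v k) * (∑ l, b l * v l))
      = ∑ p : Fin d × Fin d, (a p.1 * b p.2) * ∏ i, (v i) ^ (n p i) * rexp (-(v i) ^ 2) := by
    intro v
    have hexp : rexp (-(∑ i, (v i) ^ 2)) = ∏ i, rexp (-(v i) ^ 2) := by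
      rw [← Real.exp_sum]; simp
    have hprod : ∀ p : Fin d × Fin d,
        (∏ i, (v i) ^ (n p i)) = v p.1 * v p.2 := by
      intro p
      simp only [hn, pow_add, Finset.prod_mul_distrib, pow_ite, pow_one, pow_zero]
      rw [Finset.prod_ite_eq' Finset.univ p.1 v, Finset.prod_ite_eq' Finset.univ p.2 v]
      simp
    simp_rw [Finset.prod_mul_distrib, hprod, hexp, Fintype.sum_prod_type, Finset.sum_mul,
      Finset.mul_sum]
    exact Finset.sum_congr rfl fun k _ => Finset.sum_congr rfl fun l _ => by ring
  have hdiag : ∀ k : Fin d, (∏ i, M (n (k, k) i)) = Real.sqrt π ^ d / 2 := by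
    intro k
    have hv : ∀ i, M (n (k, k) i) = if i = k then Real.sqrt π / 2 else Real.sqrt π := by
      intro i; by_cases h : i = k <;> simp [hn, h, hM2, hM0]
    have herase : ∏ i ∈ Finset.univ.erase k,
        (if i = k then Real.sqrt π / 2 else Real.sqrt π) = Real.sqrt π ^ (d - 1) := by
      rw [Finset.prod_congr rfl (fun i hi => if_neg (Finset.ne_of_mem_erase hi)),
        Finset.prod_const, Finset.card_erase_of_mem (Finset.mem_univ k),
        Finset.card_univ, Fintype.card_fin]
    simp_rw [hv]
    rw [← Finset.mul_prod_erase Finset.univ _ (Finset.mem_univ k), herase, if_pos rfl]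
    have hd : d = (d - 1) + 1 := (Nat.succ_pred_eq_of_pos k.pos).symm
    conv_rhs => rw [hd, pow_succ]
    ring
  have hoff : ∀ k l : Fin d, l ≠ k → (∏ i, M (n (k, l) i)) = 0 := by
    intro k l hlk
    refine Finset.prod_eq_zero (Finset.mem_univ l) ?_
    have : n (k, l) l = 1 := by simp [hn, hlk]
    rw [this, hM1]
  calc ∫ v : Fin d → ℝ, rexp (-(∑ i, (v i) ^ 2)) * ((∑ k, a k * v k) * (∑ l, b l * v l))
      = ∫ v : Fin d → ℝ, ∑ p : Fin d × Fin d,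
          (a p.1 * b p.2) * ∏ i, (v i) ^ (n p i) * rexp (-(v i) ^ 2) := by simp_rw [key]
    _ = ∑ p : Fin d × Fin d, ∫ v : Fin d → ℝ,
          (a p.1 * b p.2) * ∏ i, (v i) ^ (n p i) * rexp (-(v i) ^ 2) :=
        integral_finset_sum _ (fun p _ =>
          (Integrable.fintype_prod (f := fun i x => x ^ (n p i) * rexp (-x ^ 2))
            (fun i => intg_pow_gauss (n p i))).const_mul _)
    _ = ∑ p : Fin d × Fin d, (a p.1 * b p.2) * ∏ i, M (n p i) := by
        refine Finset.sum_congr rfl fun p _ => ?_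
        rw [integral_const_mul,
          integral_fintype_prod_volume_eq_prod (f := fun i x => x ^ (n p i) * rexp (-x ^ 2))]
        simp_rw [hM]
    _ = ∑ k : Fin d, ∑ l : Fin d, (a k * b l) * ∏ i, M (n (k, l) i) := by
        rw [Fintype.sum_prod_type]
    _ = ∑ k : Fin d, (a k * b k) * (Real.sqrt π ^ d / 2) := by
        refine Finset.sum_congr rfl fun k _ => ?_
        rw [Finset.sum_eq_single k (fun l _ hlk => by rw [hoff k l hlk, mul_zero])
          (fun h => absurd (Finset.mem_univ k) h), hdiag k]
    _ = Real.sqrt π ^ d / 2 * ∑ k, a k * b k := by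
        rw [Finset.mul_sum]; exact Finset.sum_congr rfl fun k _ => by ring

lemma intg_dominant {d : ℕ} :
    Integrable (fun u : EuclideanSpace ℝ (Fin d) => ‖u‖ ^ 2 * rexp (-‖u‖ ^ 2)) := by
  classical
  have hmp := (EuclideanSpace.volume_preserving_symm_measurableEquiv_toLp (Fin d)).symm
  rw [← hmp.integrable_comp_emb (MeasurableEquiv.measurableEmbedding _)]
  have heq : ((fun u : EuclideanSpace ℝ (Fin d) => ‖u‖ ^ 2 * rexp (-‖u‖ ^ 2)) ∘
      (MeasurableEquiv.toLp 2 (Fin d → ℝ)).symm.symm)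
      = fun v : Fin d → ℝ =>
          ∑ k, ∏ i, (v i) ^ (if i = k then 2 else 0) * rexp (-(v i) ^ 2) := by
    ext v
    simp only [Function.comp_apply, MeasurableEquiv.symm_symm, MeasurableEquiv.coe_toLp,
      EuclideanSpace.norm_eq, PiLp.toLp_apply,
      Real.norm_eq_abs, sq_abs]
    rw [Real.sq_sqrt (by positivity)]
    have hexp : rexp (-(∑ i, (v i) ^ 2)) = ∏ i, rexp (-(v i) ^ 2) := by
      rw [← Real.exp_sum]; simp
    simp_rw [Finset.prod_mul_distrib, pow_ite, pow_zero, Finset.prod_ite_eq' Finset.univ _ 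
      (fun i => (v i) ^ 2)]
    simp [hexp, Finset.sum_mul]
  rw [heq]
  exact integrable_finset_sum _ (fun k _ =>
    Integrable.fintype_prod (f := fun i x => x ^ (if i = k then 2 else 0) * rexp (-x ^ 2))
      (fun i => intg_pow_gauss _))

lemma gauss_M_vals : ∃ M : ℕ → ℝ, (∀ n, M n = ∫ x : ℝ, x ^ n * rexp (-x ^ 2)) ∧
    M 0 = Real.sqrt π ∧ M 1 = 0 ∧ M 2 = Real.sqrt π / 2 := by
  refine ⟨fun n => ∫ x : ℝ, x ^ n * rexp (-x ^ 2), fun n => rfl, ?_, ?_, ?_⟩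
  · simpa using integral_gaussian 1
  · -- odd moment
    have h : ∫ x : ℝ, (-x) ^ 1 * rexp (-(-x) ^ 2) = ∫ x : ℝ, x ^ 1 * rexp (-x ^ 2) := by
      have := (Measure.measurePreserving_neg (volume : Measure ℝ)).integral_comp
        (Homeomorph.neg ℝ).isClosedEmbedding.measurableEmbedding
        (fun x : ℝ => x ^ 1 * rexp (-x ^ 2))
      simpa [Function.comp] using this
    simp only [neg_sq, pow_one, neg_mul] at h
    rw [integral_neg] at h
    simp only [pow_one]
    linarith
  · have hint := intg_pow_gauss 2
    have hsplit := integral_add_compl (measurableSet_Ioi (a := (0:ℝ))) hint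
    rw [Set.compl_Ioi] at hsplit
    have hiic : ∫ x in Set.Iic (0:ℝ), x ^ 2 * rexp (-x ^ 2)
        = ∫ x in Set.Ioi (0:ℝ), x ^ 2 * rexp (-x ^ 2) := by
      rw [show Set.Ioi (0:ℝ) = Set.Ioi (-0 : ℝ) by norm_num,
        ← integral_comp_neg_Iic (0:ℝ) (fun x => x ^ 2 * rexp (-x ^ 2))]
      simp
    have hhalf : ∫ x in Set.Ioi (0:ℝ), x ^ 2 * rexp (-x ^ 2) = Real.sqrt π / 4 := by
      have h := integral_rpow_mul_exp_neg_rpow (p := 2) (q := 2) two_pos (by norm_num)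
      simp only [show ((2:ℝ)) = ((2:ℕ):ℝ) by norm_num, Real.rpow_natCast] at h
      rw [h]
      norm_num
      rw [show (3:ℝ) / 2 = 1/2 + 1 by norm_num, Real.Gamma_add_one (by norm_num),
        Real.Gamma_one_half_eq]
      ring
    rw [hiic, hhalf] at hsplit
    linarith [hsplit]

lemma pi_version {d : ℕ} (a b : EuclideanSpace ℝ (Fin d)) :
    ∫ u : EuclideanSpace ℝ (Fin d), rexp (-‖u‖ ^ 2) * (⟪a, u⟫ * ⟪b, u⟫)
      = ∫ v : Fin d → ℝ, rexp (-(∑ i, (v i) ^ 2)) *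
          ((∑ k, a k * v k) * (∑ l, b l * v l)) := by
  have hmp := (EuclideanSpace.volume_preserving_symm_measurableEquiv_toLp (Fin d)).symm
  rw [← hmp.integral_comp (MeasurableEquiv.measurableEmbedding _)]
  congr 1
  ext v
  simp only [Function.comp_apply, MeasurableEquiv.symm_symm, MeasurableEquiv.coe_toLp,
    EuclideanSpace.norm_eq, PiLp.toLp_apply,
    PiLp.inner_apply, RCLike.inner_apply, conj_trivial, Real.norm_eq_abs, sq_abs]
  rw [Real.sq_sqrt (by positivity)]
  simp only [mul_comm]

lemma euclid_gauss_moment {d : ℕ} (a b : EuclideanSpace ℝ (Fin d)) :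
    ∫ u : EuclideanSpace ℝ (Fin d), rexp (-‖u‖ ^ 2) * (⟪a, u⟫ * ⟪b, u⟫)
      = Real.sqrt π ^ d / 2 * ⟪a, b⟫ := by
  obtain ⟨M, hM, hM0, hM1, hM2⟩ := gauss_M_vals
  rw [pi_version, pi_moment a b M hM hM0 hM1 hM2, PiLp.inner_apply]
  simp [mul_comm]

/-- Euclidean version of Theorem 2.2: for bounded `C²` functions `φᵢ, φⱼ` with
bounded first and second derivatives, the heat-kernel local correlation
`A(t) = ∫ (4πt)^{-d/2} e^{-‖y-x₀‖²/(4t)} (φᵢ y - φᵢ x₀)(φⱼ y - φⱼ x₀) dy`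
satisfies `lim_{t→0⁺} A(t)/(2t) = ⟨∇φᵢ(x₀), ∇φⱼ(x₀)⟩`. -/
theorem scaled_local_correlation_tendsto_inner_gradients {d : ℕ}
    (φi φj : EuclideanSpace ℝ (Fin d) → ℝ) (x₀ : EuclideanSpace ℝ (Fin d))
    (hφi : ContDiff ℝ 2 φi) (hφj : ContDiff ℝ 2 φj)
    (Ci : ℝ) (hCi : ∀ x, |φi x| ≤ Ci ∧ ‖fderiv ℝ φi x‖ ≤ Ci ∧ ‖iteratedFDeriv ℝ 2 φi x‖ ≤ Ci)
    (Cj : ℝ) (hCj : ∀ x, |φj x| ≤ Cj ∧ ‖fderiv ℝ φj x‖ ≤ Cj ∧ ‖iteratedFDeriv ℝ 2 φj x‖ ≤ Cj)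
    (A : ℝ → ℝ)
    (hA : ∀ t, A t = ∫ y : EuclideanSpace ℝ (Fin d),
        (4 * π * t) ^ (-(d : ℝ) / 2) * Real.exp (-‖y - x₀‖ ^ 2 / (4 * t)) *
          ((φi y - φi x₀) * (φj y - φj x₀))) :
    Tendsto (fun t => A t / (2 * t)) (nhdsWithin 0 (Set.Ioi 0))
      (nhds ⟪gradient φi x₀, gradient φj x₀⟫) := by
  classical
  have hπ : 0 < Real.sqrt π := Real.sqrt_pos.mpr pi_pos
  set c : ℝ := Real.sqrt π ^ d with hc
  have hcpos : 0 < c := pow_pos hπ d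
  set H : ℝ → EuclideanSpace ℝ (Fin d) → ℝ := fun t u =>
    (2 / c) * (rexp (-‖u‖ ^ 2) *
      (((φi (Real.sqrt (4 * t) • u + x₀) - φi x₀) / Real.sqrt (4 * t)) *
       ((φj (Real.sqrt (4 * t) • u + x₀) - φj x₀) / Real.sqrt (4 * t)))) with hH
  set L : EuclideanSpace ℝ (Fin d) → ℝ := fun u =>
    (2 / c) * (rexp (-‖u‖ ^ 2) * ((fderiv ℝ φi x₀ u) * (fderiv ℝ φj x₀ u))) with hL
  have hmain : ∀ t ∈ Set.Ioi (0:ℝ), A t / (2 * t) = ∫ u, H t u := by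
    intro t ht
    rw [Set.mem_Ioi] at ht
    have h4t : (0:ℝ) < 4 * t := by linarith
    set s := Real.sqrt (4 * t) with hs
    have hspos : 0 < s := Real.sqrt_pos.mpr h4t
    have hss : s * s = 4 * t := Real.mul_self_sqrt h4t.le
    set f : EuclideanSpace ℝ (Fin d) → ℝ := fun z =>
        (4 * π * t) ^ (-(d:ℝ)/2) * rexp (-‖z‖ ^ 2 / (4 * t)) *
          ((φi (z + x₀) - φi x₀) * (φj (z + x₀) - φj x₀)) with hf
    have h1 : A t = ∫ z : EuclideanSpace ℝ (Fin d), f z := by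
      rw [hA t, ← integral_add_right_eq_self (fun y : EuclideanSpace ℝ (Fin d) =>
        (4 * π * t) ^ (-(d : ℝ) / 2) * Real.exp (-‖y - x₀‖ ^ 2 / (4 * t)) *
          ((φi y - φi x₀) * (φj y - φj x₀))) x₀]
      simp [hf]
    have hD : Module.finrank ℝ (EuclideanSpace ℝ (Fin d)) = d := finrank_euclideanSpace_fin
    have h2 := MeasureTheory.Measure.integral_comp_smul_of_nonneg
      (μ := (volume : Measure (EuclideanSpace ℝ (Fin d)))) f s (hR := hspos.le)
    rw [hD] at h2
    have hsd : (s : ℝ) ^ d ≠ 0 := pow_ne_zero _ hspos.ne'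
    have h3 : ∫ z : EuclideanSpace ℝ (Fin d), f z = s ^ d • ∫ u, f (s • u) := by
      rw [h2, smul_smul, mul_inv_cancel₀ hsd, one_smul]
    have hscal : (s:ℝ) ^ d * (4 * π * t) ^ (-(d:ℝ)/2) = 1 / c := by
      have e1 : (s:ℝ) ^ d = (4 * t) ^ ((d:ℝ)/2) := by
        rw [hs, Real.sqrt_eq_rpow, ← Real.rpow_natCast ((4*t) ^ ((1:ℝ)/2)) d,
          ← Real.rpow_mul h4t.le]
        congr 1
        ring
      have e2 : (4 * π * t) ^ (-(d:ℝ)/2) = (4 * t) ^ (-(d:ℝ)/2) * π ^ (-(d:ℝ)/2) := by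
        rw [show 4 * π * t = (4 * t) * π by ring, Real.mul_rpow h4t.le pi_pos.le]
      have e3 : π ^ (-(d:ℝ)/2) = 1 / c := by
        rw [hc, ← Real.rpow_natCast (Real.sqrt π) d, Real.sqrt_eq_rpow,
          ← Real.rpow_mul pi_pos.le, neg_div, Real.rpow_neg pi_pos.le, one_div]
        congr 2
        ring
      rw [e1, e2, ← mul_assoc, ← Real.rpow_add h4t,
        show (d:ℝ)/2 + -(d:ℝ)/2 = 0 by ring, Real.rpow_zero, one_mul, e3]
    have hE : ∀ u : EuclideanSpace ℝ (Fin d),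
        rexp (-‖s • u‖ ^ 2 / (4 * t)) = rexp (-‖u‖ ^ 2) := by
      intro u
      congr 1
      rw [norm_smul, Real.norm_eq_abs, abs_of_pos hspos, mul_pow, sq, hss]
      field_simp
    have h4 : (fun u : EuclideanSpace ℝ (Fin d) => s ^ d * f (s • u) / (2 * t)) = H t := by
      funext u
      show s ^ d * ((4 * π * t) ^ (-(d:ℝ)/2) * rexp (-‖s • u‖ ^ 2 / (4 * t)) *
          ((φi (s • u + x₀) - φi x₀) * (φj (s • u + x₀) - φj x₀))) / (2 * t)
        = 2 / c * (rexp (-‖u‖ ^ 2) *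
          ((φi (s • u + x₀) - φi x₀) / s * ((φj (s • u + x₀) - φj x₀) / s)))
      rw [hE u]
      calc s ^ d * ((4 * π * t) ^ (-(d:ℝ)/2) * rexp (-‖u‖ ^ 2) *
              ((φi (s • u + x₀) - φi x₀) * (φj (s • u + x₀) - φj x₀))) / (2 * t)
          = (s ^ d * (4 * π * t) ^ (-(d:ℝ)/2)) * rexp (-‖u‖ ^ 2) *
              ((φi (s • u + x₀) - φi x₀) * (φj (s • u + x₀) - φj x₀)) / (2 * t) := by ring
        _ = (1 / c) * rexp (-‖u‖ ^ 2) *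
              ((φi (s • u + x₀) - φi x₀) * (φj (s • u + x₀) - φj x₀)) / (2 * t) := by
            rw [hscal]
        _ = 2 / c * (rexp (-‖u‖ ^ 2) *
              ((φi (s • u + x₀) - φi x₀) / s * ((φj (s • u + x₀) - φj x₀) / s))) := by
            rw [div_mul_div_comm, hss]
            field_simp
            ring
    rw [h1, h3, smul_eq_mul, ← integral_const_mul, ← integral_div, h4]
  have hgrad : ∀ (f : EuclideanSpace ℝ (Fin d) → ℝ) (u : EuclideanSpace ℝ (Fin d)),
      (fderiv ℝ f x₀) u = ⟪gradient f x₀, u⟫ := by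
    intro f u
    rw [gradient]
    exact (InnerProductSpace.toDual_symm_apply).symm
  have hlimval : ∫ u, L u = ⟪gradient φi x₀, gradient φj x₀⟫ := by
    rw [hL]
    simp_rw [hgrad]
    rw [integral_const_mul, euclid_gauss_moment]
    field_simp [hc]
    ring
  have hCi0 : 0 ≤ Ci := le_trans (abs_nonneg _) (hCi x₀).1
  have hCj0 : 0 ≤ Cj := le_trans (abs_nonneg _) (hCj x₀).1
  have hlip : ∀ (φ : EuclideanSpace ℝ (Fin d) → ℝ) (C : ℝ), ContDiff ℝ 2 φ →
      (∀ x, ‖fderiv ℝ φ x‖ ≤ C) → ∀ x y : EuclideanSpace ℝ (Fin d),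
      |φ y - φ x| ≤ C * ‖y - x‖ := by
    intro φ C hφ hC x y
    have := Convex.norm_image_sub_le_of_norm_fderiv_le (f := φ) (s := (Set.univ : Set (EuclideanSpace ℝ (Fin d))))
      (fun z _ => (hφ.differentiable two_ne_zero).differentiableAt)
      (fun z _ => hC z) convex_univ (Set.mem_univ x) (Set.mem_univ y)

    simpa [Real.norm_eq_abs] using this
  have hDCT : Tendsto (fun t => ∫ u, H t u) (nhdsWithin 0 (Set.Ioi 0)) (nhds (∫ u, L u)) := by
    apply tendsto_integral_filter_of_dominated_convergence
      (bound := fun u : EuclideanSpace ℝ (Fin d) =>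
        (2 / c) * (Ci * Cj) * (‖u‖ ^ 2 * rexp (-‖u‖ ^ 2)))
    · refine Eventually.of_forall fun t => Continuous.aestronglyMeasurable ?_
      rw [hH]
      have h1 : Continuous φi := hφi.continuous
      have h2 : Continuous φj := hφj.continuous
      fun_prop
    · filter_upwards [self_mem_nhdsWithin] with t ht
      rw [Set.mem_Ioi] at ht
      have h4t : (0:ℝ) < 4 * t := by linarith
      set s := Real.sqrt (4 * t) with hs
      have hspos : 0 < s := Real.sqrt_pos.mpr h4t
      refine Eventually.of_forall fun u => ?_
      have hnorm : ‖s • u + x₀ - x₀‖ = s * ‖u‖ := by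
        rw [add_sub_cancel_right, norm_smul, Real.norm_eq_abs, abs_of_pos hspos]
      have hi : |(φi (s • u + x₀) - φi x₀) / s| ≤ Ci * ‖u‖ := by
        rw [abs_div, abs_of_pos hspos, div_le_iff₀ hspos]
        calc |φi (s • u + x₀) - φi x₀| ≤ Ci * ‖s • u + x₀ - x₀‖ :=
              hlip φi Ci hφi (fun z => (hCi z).2.1) x₀ (s • u + x₀)
          _ = Ci * ‖u‖ * s := by rw [hnorm]; ring
      have hj : |(φj (s • u + x₀) - φj x₀) / s| ≤ Cj * ‖u‖ := by
        rw [abs_div, abs_of_pos hspos, div_le_iff₀ hspos]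
        calc |φj (s • u + x₀) - φj x₀| ≤ Cj * ‖s • u + x₀ - x₀‖ :=
              hlip φj Cj hφj (fun z => (hCj z).2.1) x₀ (s • u + x₀)
          _ = Cj * ‖u‖ * s := by rw [hnorm]; ring
      have hprod : |(φi (s • u + x₀) - φi x₀) / s * ((φj (s • u + x₀) - φj x₀) / s)|
          ≤ (Ci * Cj) * ‖u‖ ^ 2 := by
        rw [abs_mul]
        calc |(φi (s • u + x₀) - φi x₀) / s| * |(φj (s • u + x₀) - φj x₀) / s|
            ≤ (Ci * ‖u‖) * (Cj * ‖u‖) :=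
              mul_le_mul hi hj (abs_nonneg _) (by positivity)
          _ = (Ci * Cj) * ‖u‖ ^ 2 := by ring
      show ‖H t u‖ ≤ (2 / c) * (Ci * Cj) * (‖u‖ ^ 2 * rexp (-‖u‖ ^ 2))
      have hHtu : H t u = 2 / c * (rexp (-‖u‖ ^ 2) *
          ((φi (s • u + x₀) - φi x₀) / s * ((φj (s • u + x₀) - φj x₀) / s))) := rfl
      rw [hHtu, Real.norm_eq_abs, abs_mul, abs_mul]
      rw [abs_of_nonneg (by positivity : (0:ℝ) ≤ 2 / c),
        abs_of_nonneg (Real.exp_nonneg _)]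
      calc 2 / c * (rexp (-‖u‖ ^ 2) *
            |(φi (s • u + x₀) - φi x₀) / s * ((φj (s • u + x₀) - φj x₀) / s)|)
          ≤ 2 / c * (rexp (-‖u‖ ^ 2) * ((Ci * Cj) * ‖u‖ ^ 2)) := by
            have h2c : (0:ℝ) ≤ 2 / c := by positivity
            have he : (0:ℝ) ≤ rexp (-‖u‖ ^ 2) := Real.exp_nonneg _
            exact mul_le_mul_of_nonneg_left
              (mul_le_mul_of_nonneg_left hprod he) h2c
        _ = (2 / c) * (Ci * Cj) * (‖u‖ ^ 2 * rexp (-‖u‖ ^ 2)) := by ring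
    · exact intg_dominant.const_mul _
    · refine Eventually.of_forall fun u => ?_
      have hst : Tendsto (fun t : ℝ => Real.sqrt (4 * t)) (nhdsWithin 0 (Set.Ioi 0))
          (nhdsWithin 0 {(0:ℝ)}ᶜ) := by
        apply tendsto_nhdsWithin_of_tendsto_nhds_of_eventually_within
        · have hcont : Continuous fun t : ℝ => Real.sqrt (4 * t) := by fun_prop
          have := (hcont.tendsto 0).mono_left (nhdsWithin_le_nhds (s := Set.Ioi (0:ℝ)))
          simpa using this
        · filter_upwards [self_mem_nhdsWithin] with t ht
          rw [Set.mem_Ioi] at ht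
          have : 0 < Real.sqrt (4 * t) := Real.sqrt_pos.mpr (by linarith)
          exact this.ne'
      have hslope : ∀ (φ : EuclideanSpace ℝ (Fin d) → ℝ), ContDiff ℝ 2 φ →
          Tendsto (fun r : ℝ => (φ (r • u + x₀) - φ x₀) / r) (nhdsWithin 0 {(0:ℝ)}ᶜ)
            (nhds ((fderiv ℝ φ x₀) u)) := by
        intro φ hφ
        have h1 : HasDerivAt (fun r : ℝ => r • u + x₀) u 0 := by
          have := ((hasDerivAt_id (0:ℝ)).smul_const u).add_const x₀
          simpa using this
        have h2 : HasDerivAt (fun r : ℝ => φ (r • u + x₀)) ((fderiv ℝ φ x₀) u) 0 := by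
          have hd := ((hφ.differentiable two_ne_zero).differentiableAt
            (x := (0:ℝ) • u + x₀)).hasFDerivAt
          have := hd.comp_hasDerivAt 0 h1
          simp at this
          exact this
        have h3 := hasDerivAt_iff_tendsto_slope.mp h2
        refine h3.congr fun r => ?_
        rw [slope_def_field]
        simp [div_eq_mul_inv, mul_comm]
      have hTi := (hslope φi hφi).comp hst
      have hTj := (hslope φj hφj).comp hst
      have : Tendsto (fun t => H t u) (nhdsWithin 0 (Set.Ioi 0))
          (nhds ((2 / c) * (rexp (-‖u‖ ^ 2) * ((fderiv ℝ φi x₀ u) * (fderiv ℝ φj x₀ u))))) := by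
        exact tendsto_const_nhds.mul (tendsto_const_nhds.mul (hTi.mul hTj))
      exact this
  rw [← hlimval]
  exact hDCT.congr' (eventuallyEq_of_mem self_mem_nhdsWithin
    fun t ht => (hmain t ht).symm)
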